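/- Suppose y2 − y1 ≤ √2·L. Then for every x with y1 ≤ x ≤ (y1 + y2)/2 and x < y2, one has (x − y1)/(y2 − x) ≤ exp(−(2/L²)·(y2 − y1)·((y1 + y2)/2 − x)); equivalently, (x − y1)/(y2 − x) ≤ exp(−((x − y2)² − (x − y1)²)/L²). -/

import Mathlib

open Real in
/-- `2(t-1)/(t+1) ≤ log t` for `t ≥ 1`. -/
lemma aux_log_ineq (t : ℝ) (ht : 1 ≤ t) : 2 * (t - 1) / (t + 1) ≤ Real.log t := by
  set f : ℝ → ℝ := fun s => Real.log s + 4 * (s + 1)⁻¹ with hf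
  have hd : ∀ s : ℝ, 0 < s → HasDerivAt f (s⁻¹ + 4 * (-1 / (s + 1) ^ 2)) s := by
    intro s hs
    have h1 : HasDerivAt Real.log s⁻¹ s := Real.hasDerivAt_log (ne_of_gt hs)
    have h2 : HasDerivAt (fun y : ℝ => (y + 1)⁻¹) (-1 / (s + 1) ^ 2) s := by
      have := ((hasDerivAt_id s).add_const 1).inv (by positivity)
      exact this
    exact h1.add (h2.const_mul 4)
  have key : MonotoneOn f (Set.Ici 1) := by
    apply monotoneOn_of_deriv_nonneg (convex_Ici 1)
    · intro s hs
      simp only [Set.mem_Ici] at hs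
      exact (hd s (by linarith)).continuousAt.continuousWithinAt
    · intro s hs
      rw [interior_Ici] at hs
      simp only [Set.mem_Ioi] at hs
      exact (hd s (by linarith)).differentiableAt.differentiableWithinAt
    · intro s hs
      rw [interior_Ici] at hs
      simp only [Set.mem_Ioi] at hs
      rw [(hd s (by linarith)).deriv]
      have h1 : (0:ℝ) < s := by linarith
      have h2 : (0:ℝ) < (s + 1) ^ 2 := by positivity
      have : s⁻¹ + 4 * (-1 / (s + 1) ^ 2) = (s - 1) ^ 2 / (s * (s + 1) ^ 2) := by
        field_simp
        ring
      rw [this]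
      positivity
  have h1 : f 1 ≤ f t := key (by simp) (by simpa using ht) ht
  have hf1 : f 1 = 2 := by norm_num [hf]
  have ht1 : (0:ℝ) < t + 1 := by linarith
  have : 2 - 4 * (t + 1)⁻¹ ≤ Real.log t := by
    have := h1; rw [hf1] at this; simp only [hf] at this; linarith
  have heq : 2 * (t - 1) / (t + 1) = 2 - 4 * (t + 1)⁻¹ := by
    field_simp
    ring
  linarith [heq ▸ this]

/-- Key inequality: if `y2 - y1 ≤ √2 · L`, then for `y1 ≤ x ≤ (y1+y2)/2` (and
`x < y2`), the ratio `(x - y1)/(y2 - x)` is at most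
`exp(-(2/L²)(y2 - y1)((y1+y2)/2 - x))`, equivalently at most
`exp(-((x - y2)² - (x - y1)²)/L²)`. -/
theorem ratio_le_exp_of_close
    (y1 y2 L : ℝ) (hy : y1 < y2) (hL : 0 < L)
    (hdist : y2 - y1 ≤ Real.sqrt 2 * L) :
    ∀ x : ℝ, y1 ≤ x → x ≤ (y1 + y2) / 2 → x < y2 →
      (x - y1) / (y2 - x) ≤
        Real.exp (-(2 / L ^ 2) * (y2 - y1) * ((y1 + y2) / 2 - x)) ∧
      (x - y1) / (y2 - x) ≤
        Real.exp (-((x - y2) ^ 2 - (x - y1) ^ 2) / L ^ 2) := by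
  intro x hx1 hxm hx2
  have hexpeq : -(2 / L ^ 2) * (y2 - y1) * ((y1 + y2) / 2 - x)
      = -((x - y2) ^ 2 - (x - y1) ^ 2) / L ^ 2 := by
    field_simp
    ring
  obtain ⟨a, ha⟩ : ∃ a, a = x - y1 := ⟨_, rfl⟩
  obtain ⟨b, hb⟩ : ∃ b, b = y2 - x := ⟨_, rfl⟩
  have hb0 : 0 < b := by rw [hb]; linarith
  have ha0 : 0 ≤ a := by rw [ha]; linarith
  have hab : a ≤ b := by rw [ha, hb]; linarith
  have hL2 : (a + b) ^ 2 ≤ 2 * L ^ 2 := by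
    have hsum : a + b = y2 - y1 := by rw [ha, hb]; ring
    have h2 : (0:ℝ) ≤ y2 - y1 := by linarith
    have := mul_self_le_mul_self h2 hdist
    have hs2 : Real.sqrt 2 * L * (Real.sqrt 2 * L) = 2 * L ^ 2 := by
      have : Real.sqrt 2 * Real.sqrt 2 = 2 := Real.mul_self_sqrt (by norm_num)
      nlinarith [this]
    nlinarith [this]
  have hmain : a / b ≤ Real.exp (-((x - y2) ^ 2 - (x - y1) ^ 2) / L ^ 2) := by
    have hE : -((x - y2) ^ 2 - (x - y1) ^ 2) / L ^ 2 = -((b ^ 2 - a ^ 2) / L ^ 2) := by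
      rw [ha, hb]; ring
    rw [hE]
    rcases eq_or_lt_of_le ha0 with h0 | h0
    · rw [← h0]
      simp
      positivity
    · have hlog : (b ^ 2 - a ^ 2) / L ^ 2 ≤ Real.log (b / a) := by
        have ht : 1 ≤ b / a := (one_le_div h0).mpr hab
        have h1 := aux_log_ineq (b / a) ht
        have ha' : a ≠ 0 := ne_of_gt h0
        have hab' : (0:ℝ) < a + b := by linarith
        have heq : 2 * (b / a - 1) / (b / a + 1) = 2 * (b - a) / (a + b) := by
          rw [div_eq_div_iff (by positivity) (ne_of_gt hab')]
          field_simp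
          ring_nf
        have hstep : (b ^ 2 - a ^ 2) / L ^ 2 ≤ 2 * (b - a) / (a + b) := by
          rw [div_le_div_iff₀ (by positivity) (by positivity)]
          nlinarith [hL2, sub_nonneg.mpr hab]
        linarith [heq ▸ h1]
      rw [← Real.log_le_iff_le_exp (by positivity),
        Real.log_div (ne_of_gt h0) (ne_of_gt hb0)]
      have hld : Real.log (b / a) = Real.log b - Real.log a :=
        Real.log_div (ne_of_gt hb0) (ne_of_gt h0)
      linarith [hlog, hld ▸ hlog]
  have hq : (x - y1) / (y2 - x) = a / b := by rw [ha, hb]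
  rw [hq, hexpeq]
  exact ⟨hmain, hmain⟩
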